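/- The gradient of the Moreau envelope is Lipschitz continuous with constant 1/μ: if p₁ is a proximal point of h at x₁ with parameter μ and p₂ is a proximal point of h at x₂ with parameter μ, then ‖(x₁ − p₁)/μ − (x₂ − p₂)/μ‖ ≤ (1/μ)·‖x₁ − x₂‖. -/
import Mathlib


open scoped NNReal RealInnerProductSpace

lemma prox_subgrad
    {E : Type*} [NormedAddCommGroup E] [InnerProductSpace ℝ E]
    (h : E → ℝ) (hconv : ConvexOn ℝ Set.univ h)
    (μ : ℝ) (hμ : 0 < μ) (x p : E)
    (hp : ∀ z : E, h p + ‖p - x‖ ^ 2 / (2 * μ) ≤ h z + ‖z - x‖ ^ 2 / (2 * μ))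
    (z : E) : ⟪x - p, z - p⟫ / μ ≤ h z - h p := by
  apply le_of_forall_pos_le_add
  intro ε hε
  rcases eq_or_ne z p with rfl | hzp
  · simp only [sub_self, inner_zero_right, zero_div]
    linarith
  have hzp' : z - p ≠ 0 := sub_ne_zero.mpr hzp
  have hn : (0:ℝ) < ‖z - p‖ ^ 2 := pow_pos (norm_pos_iff.mpr hzp') 2
  have hc : (0:ℝ) < 2 * μ := by linarith
  set t : ℝ := min 1 (2 * μ * ε / ‖z - p‖ ^ 2) with ht
  have ht0 : 0 < t := lt_min one_pos (by positivity)
  have ht1 : t ≤ 1 := min_le_left _ _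
  have htε : t * ‖z - p‖ ^ 2 ≤ 2 * μ * ε := by
    have h' : t ≤ 2 * μ * ε / ‖z - p‖ ^ 2 := min_le_right _ _
    calc t * ‖z - p‖ ^ 2 ≤ (2 * μ * ε / ‖z - p‖ ^ 2) * ‖z - p‖ ^ 2 :=
          mul_le_mul_of_nonneg_right h' (le_of_lt hn)
      _ = 2 * μ * ε := by field_simp
  -- convexity
  have hcx : h (p + t • (z - p)) ≤ (1 - t) * h p + t * h z := by
    have := hconv.2 (Set.mem_univ p) (Set.mem_univ z)
      (by linarith : (0:ℝ) ≤ 1 - t) (le_of_lt ht0) (by ring)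
    have heq : (1 - t) • p + t • z = p + t • (z - p) := by
      rw [smul_sub, sub_smul, one_smul]; abel
    rwa [heq] at this
  have hmin := hp (p + t • (z - p))
  have hnorm : ‖p + t • (z - p) - x‖ ^ 2
      = ‖p - x‖ ^ 2 + 2 * t * ⟪p - x, z - p⟫ + t ^ 2 * ‖z - p‖ ^ 2 := by
    have heq2 : p + t • (z - p) - x = (p - x) + t • (z - p) := by abel
    rw [heq2, ← real_inner_self_eq_norm_sq, ← real_inner_self_eq_norm_sq,
      ← real_inner_self_eq_norm_sq]
    simp only [inner_add_add_self, real_inner_smul_left, real_inner_smul_right]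
    rw [real_inner_comm (z - p) (p - x)]
    ring
  rw [hnorm] at hmin
  -- multiply out the divisions in hmin
  have hmin' : h p * (2 * μ) + ‖p - x‖ ^ 2 ≤ h (p + t • (z - p)) * (2 * μ)
      + (‖p - x‖ ^ 2 + 2 * t * ⟪p - x, z - p⟫ + t ^ 2 * ‖z - p‖ ^ 2) := by
    have := mul_le_mul_of_nonneg_right hmin hc.le
    rw [add_mul, add_mul, div_mul_cancel₀ _ (ne_of_gt hc), div_mul_cancel₀ _ (ne_of_gt hc)] at this
    linarith
  have h1 : t * ((h p - h z) * (2 * μ)) ≤ t * (2 * ⟪p - x, z - p⟫ + t * ‖z - p‖ ^ 2) := by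
    have hcx' := mul_le_mul_of_nonneg_right hcx hc.le
    nlinarith [hmin', hcx']
  have h2 : (h p - h z) * (2 * μ) ≤ 2 * ⟪p - x, z - p⟫ + t * ‖z - p‖ ^ 2 :=
    le_of_mul_le_mul_left (by simpa [mul_comm] using h1) ht0
  have hinner : ⟪x - p, z - p⟫ = -⟪p - x, z - p⟫ := by
    have : x - p = -(p - x) := by abel
    rw [this, inner_neg_left]
  rw [hinner, div_le_iff₀ hμ]
  nlinarith [h2, htε]

/-- The gradient of the Moreau envelope is `1/μ`-Lipschitz continuous. -/
theorem moreau_envelope_gradient_lipschitz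
    {E : Type*} [NormedAddCommGroup E] [InnerProductSpace ℝ E] [FiniteDimensional ℝ E]
    (h : E → ℝ) (ℓh : ℝ≥0) (hconv : ConvexOn ℝ Set.univ h) (hlip : LipschitzWith ℓh h)
    (μ : ℝ) (hμ : 0 < μ) (x₁ x₂ p₁ p₂ : E)
    (hp₁ : ∀ z : E, h p₁ + ‖p₁ - x₁‖ ^ 2 / (2 * μ) ≤ h z + ‖z - x₁‖ ^ 2 / (2 * μ))
    (hp₂ : ∀ z : E, h p₂ + ‖p₂ - x₂‖ ^ 2 / (2 * μ) ≤ h z + ‖z - x₂‖ ^ 2 / (2 * μ)) :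
    ‖μ⁻¹ • (x₁ - p₁) - μ⁻¹ • (x₂ - p₂)‖ ≤ (1 / μ) * ‖x₁ - x₂‖ := by
  have s1 := prox_subgrad h hconv μ hμ x₁ p₁ hp₁ p₂
  have s2 := prox_subgrad h hconv μ hμ x₂ p₂ hp₂ p₁
  have hsum : ⟪x₁ - p₁, p₂ - p₁⟫ + ⟪x₂ - p₂, p₁ - p₂⟫ ≤ 0 := by
    have hadd : ⟪x₁ - p₁, p₂ - p₁⟫ / μ + ⟪x₂ - p₂, p₁ - p₂⟫ / μ ≤ 0 := by linarith
    have := mul_le_mul_of_nonneg_left hadd (le_of_lt hμ)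
    calc ⟪x₁ - p₁, p₂ - p₁⟫ + ⟪x₂ - p₂, p₁ - p₂⟫
        = μ * (⟪x₁ - p₁, p₂ - p₁⟫ / μ + ⟪x₂ - p₂, p₁ - p₂⟫ / μ) := by
          field_simp
      _ ≤ μ * 0 := this
      _ = 0 := mul_zero μ
  set u := x₁ - x₂ with hu
  set v := p₁ - p₂ with hv
  have hfirm : ‖v‖ ^ 2 ≤ ⟪u, v⟫ := by
    have e1 : p₂ - p₁ = -v := by rw [hv]; abel
    rw [e1, inner_neg_right] at hsum
    have e3 : ⟪x₁ - p₁, v⟫ - ⟪x₂ - p₂, v⟫ = ⟪u - v, v⟫ := by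
      rw [← inner_sub_left]
      congr 1
      rw [hu, hv]; abel
    have hpos : 0 ≤ ⟪u - v, v⟫ := by linarith [e3, hsum]
    rw [inner_sub_left] at hpos
    rw [← real_inner_self_eq_norm_sq]
    linarith
  have hle : ‖u - v‖ ≤ ‖u‖ := by
    have hexp : ‖u - v‖ ^ 2 = ‖u‖ ^ 2 - 2 * ⟪u, v⟫ + ‖v‖ ^ 2 := by
      rw [← real_inner_self_eq_norm_sq, ← real_inner_self_eq_norm_sq,
        ← real_inner_self_eq_norm_sq]
      simp only [inner_sub_sub_self]
      rw [real_inner_comm v u]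
      ring
    have h2 : ‖u - v‖ ^ 2 ≤ ‖u‖ ^ 2 := by
      rw [hexp]; nlinarith [hfirm, sq_nonneg ‖v‖]
    nlinarith [norm_nonneg (u - v), norm_nonneg u, h2]
  have heq : μ⁻¹ • (x₁ - p₁) - μ⁻¹ • (x₂ - p₂) = μ⁻¹ • (u - v) := by
    rw [← smul_sub]; congr 1; rw [hu, hv]; abel
  rw [heq, norm_smul, norm_inv, Real.norm_eq_abs, abs_of_pos hμ, one_div]
  exact mul_le_mul_of_nonneg_left hle (by positivity)
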